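/- arXiv:1602.06906 — 2 statements merged into one kernel-verified Lean document; each statement's English description precedes it below -/
import Mathlib

section
/- Let X be the smallest class of groups containing the class A (finitely generated free groups and amenable groups) which is closed under directed unions and group extensions. Then X = ⋃_{a ordinal} X_a, where X_0 = {1}, X_a = Loc(X_{a-1}·A) for successor a, and X_a = ⋃_{b<a} X_b for limit a. In particular, for all ordinals a, b one has X_a · X_b ⊆ X_{a+b}. -/
/-- A class of groups. -/
def GroupClass : Type 1 := (G : Type) → [inst : Group G] → Prop

/-- A group is amenable if it admits a left-invariant finitely additive
probability measure on all subsets. -/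
def Amenable (G : Type) [Group G] : Prop :=
  ∃ m : Set G → ℝ,
    (∀ s, 0 ≤ m s) ∧ m Set.univ = 1 ∧
    (∀ s t : Set G, Disjoint s t → m (s ∪ t) = m s + m t) ∧
    (∀ (g : G) (s : Set G), m ((g * ·) '' s) = m s)

/-- The class `A` of finitely generated free groups and amenable groups. -/
def classA : GroupClass := fun G [Group G] =>
  (∃ n : ℕ, Nonempty (G ≃* FreeGroup (Fin n))) ∨ Amenable G

/-- `Loc Y`: groups all of whose finite subsets lie in a `Y`-subgroup. -/
def Loc (Y : GroupClass) : GroupClass := fun G [Group G] =>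
  ∀ s : Finset G, ∃ H : Subgroup G, (∀ x ∈ s, x ∈ H) ∧ Y H

/-- `Y·Z`: groups with a normal subgroup in `Y` and quotient in `Z`. -/
def classMul (Y Z : GroupClass) : GroupClass := fun G [Group G] =>
  ∃ H : Subgroup G, ∃ hn : H.Normal,
    Y H ∧ (letI : H.Normal := hn; Z (G ⧸ H))

/-- The transfinite hierarchy `X_a`: `X_0 = {1}`, `X_{a+1} = Loc(X_a · A)`,
and unions at limit ordinals. -/
def Xcl (A : GroupClass) : Ordinal → GroupClass := fun a =>
  Ordinal.limitRecOn a
    (fun (G : Type) [Group G] => Subsingleton G)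
    (fun _ X' => Loc (classMul X' A))
    (fun a _ IH => fun (G : Type) [Group G] => ∃ b, ∃ hb : b < a, IH b hb G)

/-- `C` is closed under directed unions. -/
def DirectedUnionClosed (C : GroupClass) : Prop :=
  ∀ (G : Type) [Group G] (ι : Type) (f : ι → Subgroup G),
    Directed (· ≤ ·) f → (∀ i, C (f i)) → (⨆ i, f i) = ⊤ → C G

/-- `C` is closed under extensions. -/
def ExtensionClosed (C : GroupClass) : Prop :=
  ∀ (G : Type) [Group G] (H : Subgroup G) (hn : H.Normal),
    C H → (letI : H.Normal := hn; C (G ⧸ H)) → C G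

/-- `C` contains the class `A`. -/
def Contains (A C : GroupClass) : Prop := ∀ (G : Type) [Group G], A G → C G

/-- The smallest class of groups containing `A` which is closed under directed
unions and extensions. -/
def smallestX (A : GroupClass) : GroupClass := fun (G : Type) [Group G] =>
  ∀ C : GroupClass, Contains A C → DirectedUnionClosed C → ExtensionClosed C → C G

open Classical in
theorem amenable_of_subsingleton (G : Type) [Group G] [Subsingleton G] : Amenable G := by
  refine ⟨fun s => if (1:G) ∈ s then 1 else 0, fun s => ?_, by simp, fun s t hst => ?_, fun g s => ?_⟩
  · dsimp only; split <;> norm_num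
  · have key : ∀ u : Set G, ((1:G) ∈ u) ∨ ((1:G) ∉ u) := fun u => Classical.em _
    by_cases h : (1:G) ∈ s
    · have ht : (1:G) ∉ t := fun h' => (Set.disjoint_left.mp hst h h').elim
      simp [Set.mem_union, h, ht]
    · by_cases h' : (1:G) ∈ t <;> simp [Set.mem_union, h, h']
  · have key : (1:G) ∈ (g * ·) '' s ↔ (1:G) ∈ s := by
      constructor
      · rintro ⟨x, hx, -⟩; rwa [Subsingleton.elim (1:G) x]
      · intro h; exact ⟨1, h, Subsingleton.elim _ _⟩
    simp only [key]

theorem amenable_congr {G H : Type} [Group G] [Group H] (e : G ≃* H) (h : Amenable G) :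
    Amenable H := by
  obtain ⟨m, h0, h1, hadd, hinv⟩ := h
  refine ⟨fun s => m (e ⁻¹' s), fun s => h0 _, by simpa using h1, fun s t hst => ?_, fun g s => ?_⟩
  · show m (e ⁻¹' (s ∪ t)) = _
    rw [Set.preimage_union]; exact hadd _ _ (hst.preimage e)
  · show m (e ⁻¹' ((g * ·) '' s)) = m (e ⁻¹' s)
    have : e ⁻¹' ((g * ·) '' s) = (e.symm g * ·) '' (e ⁻¹' s) := by
      ext x
      simp only [Set.mem_preimage, Set.mem_image]
      constructor
      · rintro ⟨y, hy, hxy⟩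
        exact ⟨e.symm y, by simpa using hy, by
          apply e.injective; simp [map_mul, hxy]⟩
      · rintro ⟨y, hy, rfl⟩
        exact ⟨e y, hy, by simp [map_mul]⟩
    rw [this, hinv]
theorem amenable_subgroup {G : Type} [Group G] (H : Subgroup G) (hG : Amenable G) :
    Amenable H := by
  obtain ⟨m, h0, h1, hadd, hinv⟩ := hG
  let R : Setoid G := QuotientGroup.rightRel H
  let r : G → G := fun g => Quotient.out (Quotient.mk R g)
  have hrel : ∀ g, g * (r g)⁻¹ ∈ H := by
    intro g
    have h1 : Quotient.mk R (r g) = Quotient.mk R g := Quotient.out_eq _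
    have h2 : R.r (r g) g := Quotient.exact h1
    exact (QuotientGroup.rightRel_apply).mp h2
  have hr_mul : ∀ h : G, h ∈ H → ∀ g, r (h * g) = r g := by
    intro h hh g
    have : R.r (h * g) g := by
      rw [QuotientGroup.rightRel_apply]
      simpa using inv_mem hh
    show Quotient.out (Quotient.mk R (h*g)) = Quotient.out (Quotient.mk R g)
    rw [Quotient.sound this]
  let T : Set H → Set G := fun s => {g : G | (⟨g * (r g)⁻¹, hrel g⟩ : H) ∈ s}
  refine ⟨fun s => m (T s), fun s => h0 _, ?_, fun s t hst => ?_, fun h s => ?_⟩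
  · show m (T Set.univ) = 1
    have : T Set.univ = Set.univ := by ext g; simp [T]
    rw [this, h1]
  · have hU : T (s ∪ t) = T s ∪ T t := by ext g; simp [T, Set.mem_union]
    have hD : Disjoint (T s) (T t) := by
      rw [Set.disjoint_left]
      intro g hgs hgt
      exact Set.disjoint_left.mp hst hgs hgt
    show m (T (s ∪ t)) = m (T s) + m (T t)
    rw [hU]; exact hadd _ _ hD
  · show m (T ((h * ·) '' s)) = m (T s)
    have key : T ((h * ·) '' s) = ((h : G) * ·) '' (T s) := by
      ext g
      constructor
      · rintro hg
        obtain ⟨x, hx, hhx⟩ := hg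
        refine ⟨(h : G)⁻¹ * g, ?_, by group⟩
        show (⟨((h:G)⁻¹ * g) * (r ((h:G)⁻¹ * g))⁻¹, _⟩ : H) ∈ s
        have hrg : r ((h:G)⁻¹ * g) = r g := hr_mul _ (inv_mem h.2) g
        have : ((h:G)⁻¹ * g) * (r ((h:G)⁻¹ * g))⁻¹ = (x : G) := by
          rw [hrg]
          have : ((h * x : H) : G) = g * (r g)⁻¹ := congrArg Subtype.val hhx
          push_cast at this
          rw [mul_assoc, ← this]; group
        convert hx using 1
        exact Subtype.ext this
      · rintro ⟨g', hg', rfl⟩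
        refine ⟨⟨g' * (r g')⁻¹, hrel g'⟩, hg', ?_⟩
        have hrg : r ((h:G) * g') = r g' := hr_mul _ h.2 g'
        apply Subtype.ext
        show (h : G) * (g' * (r g')⁻¹) = ((h:G) * g') * (r ((h:G)*g'))⁻¹
        rw [hrg]; group
    rw [key, hinv]
theorem xcl_zero (A : GroupClass) : Xcl A 0 = (fun (G : Type) [Group G] => Subsingleton G) := by
  unfold Xcl; exact Ordinal.limitRecOn_zero ..

theorem xcl_succ (A : GroupClass) (a : Ordinal) :
    Xcl A (Order.succ a) = Loc (classMul (Xcl A a) A) := by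
  rw [← Ordinal.add_one_eq_succ]; unfold Xcl; exact Ordinal.limitRecOn_add_one ..

theorem xcl_limit (A : GroupClass) {a : Ordinal} (ha : Order.IsSuccLimit a) :
    Xcl A a = (fun (G : Type) [Group G] => ∃ b, ∃ _ : b < a, Xcl A b G) := by
  unfold Xcl; exact Ordinal.limitRecOn_limit _ _ _ _ ha

theorem amenable_of_injective {G H : Type} [Group G] [Group H] (f : G →* H)
    (hf : Function.Injective f) (h : Amenable H) : Amenable G :=
  amenable_congr (MonoidHom.ofInjective hf).symm (amenable_subgroup _ h)

theorem classA_congr {G H : Type} [Group G] [Group H] (e : G ≃* H) (h : classA G) : classA H := by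
  rcases h with ⟨n, ⟨i⟩⟩ | h
  · exact Or.inl ⟨n, ⟨e.symm.trans i⟩⟩
  · exact Or.inr (amenable_congr e h)

/-- Transfer a normal subgroup structure along a `MulEquiv`. -/
theorem normal_map_of_equiv {G H : Type} [Group G] [Group H] (e : G ≃* H) (K : Subgroup G)
    (hK : K.Normal) : (K.map e.toMonoidHom).Normal := by
  constructor
  intro n hn g
  obtain ⟨k, hk, rfl⟩ := hn
  refine ⟨e.symm g * k * (e.symm g)⁻¹, hK.conj_mem k hk _, ?_⟩
  simp [map_mul]

/-- The quotient by the image of a subgroup under a `MulEquiv`. -/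
noncomputable def quotientMapEquiv {G H : Type} [Group G] [Group H] (e : G ≃* H) (K : Subgroup G)
    (hK : K.Normal) :
    letI := hK; letI := normal_map_of_equiv e K hK
    (G ⧸ K) ≃* (H ⧸ K.map e.toMonoidHom) := by
  letI := hK; letI := normal_map_of_equiv e K hK
  have hker : ((QuotientGroup.mk' (K.map e.toMonoidHom)).comp e.toMonoidHom).ker = K := by
    ext g
    simp only [MonoidHom.mem_ker, MonoidHom.comp_apply, QuotientGroup.mk'_apply,
      QuotientGroup.eq_one_iff]
    constructor
    · rintro ⟨k, hk, hek⟩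
      rwa [← e.injective hek]
    · intro hg; exact ⟨g, hg, rfl⟩
  have hsurj : Function.Surjective ((QuotientGroup.mk' (K.map e.toMonoidHom)).comp e.toMonoidHom) :=
    (QuotientGroup.mk'_surjective _).comp e.surjective
  exact (QuotientGroup.quotientMulEquivOfEq hker.symm).trans
    (QuotientGroup.quotientKerEquivOfSurjective _ hsurj)

theorem classMul_congr {Y Z : GroupClass}
    (hY : ∀ (G H : Type) [Group G] [Group H], (G ≃* H) → Y G → Y H)
    (hZ : ∀ (G H : Type) [Group G] [Group H], (G ≃* H) → Z G → Z H)
    {G H : Type} [Group G] [Group H] (e : G ≃* H) (h : classMul Y Z G) : classMul Y Z H := by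
  obtain ⟨K, hn, hYK, hZQ⟩ := h
  letI := hn
  letI h2 := normal_map_of_equiv e K hn
  exact ⟨K.map e.toMonoidHom, h2, hY _ _ (K.equivMapOfInjective e.toMonoidHom e.injective) hYK,
    hZ _ _ (quotientMapEquiv e K hn) hZQ⟩

theorem xcl_congr : ∀ (a : Ordinal) (G H : Type) [Group G] [Group H],
    (G ≃* H) → Xcl classA a G → Xcl classA a H := by
  intro a
  induction a using Ordinal.limitRecOn with
  | zero =>
    intro G H _ _ e h
    rw [xcl_zero] at *
    exact ⟨fun x y => by
      rw [← e.apply_symm_apply x, ← e.apply_symm_apply y, Subsingleton.elim (e.symm x) (e.symm y)]⟩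
  | add_one a IH =>
    simp only [Ordinal.add_one_eq_succ] at *
    intro G H _ _ e h
    classical
    rw [xcl_succ] at *
    intro s
    obtain ⟨K, hsK, hK⟩ := h (s.image e.symm)
    refine ⟨K.map e.toMonoidHom, fun x hx => ?_, ?_⟩
    · refine ⟨e.symm x, hsK _ (Finset.mem_image_of_mem _ hx), by simp⟩
    · exact classMul_congr IH (fun G H _ _ => classA_congr)
        (K.equivMapOfInjective e.toMonoidHom e.injective) hK
  | limit a ha IH =>
    intro G H _ _ e h
    rw [xcl_limit _ ha] at *
    obtain ⟨b, hb, hG⟩ := h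
    exact ⟨b, hb, IH b hb _ _ e hG⟩

theorem classA_of_subsingleton (G : Type) [Group G] [Subsingleton G] : classA G :=
  Or.inr (amenable_of_subsingleton G)

theorem classMul_of_xcl {a : Ordinal} {G : Type} [Group G] (h : Xcl classA a G) :
    classMul (Xcl classA a) classA G := by
  refine ⟨⊤, inferInstance, ?_, ?_⟩
  · exact xcl_congr a G _ Subgroup.topEquiv.symm h
  · haveI := QuotientGroup.subsingleton_quotient_top (G := G)
    exact classA_of_subsingleton _

theorem xcl_le_succ {a : Ordinal} {G : Type} [Group G] (h : Xcl classA a G) :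
    Xcl classA (Order.succ a) G := by
  rw [xcl_succ]
  intro s
  exact ⟨⊤, fun x _ => trivial, classMul_of_xcl (xcl_congr a G _ Subgroup.topEquiv.symm h)⟩

theorem xcl_mono : ∀ (b a : Ordinal), a ≤ b → ∀ (G : Type) [Group G],
    Xcl classA a G → Xcl classA b G := by
  intro b
  induction b using Ordinal.limitRecOn with
  | zero =>
    intro a ha G _ h
    rw [nonpos_iff_eq_zero.mp ha] at h
    exact h
  | add_one b IH =>
    simp only [Ordinal.add_one_eq_succ] at *
    intro a ha G _ h
    rcases eq_or_lt_of_le ha with rfl | hlt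
    · exact h
    · exact xcl_le_succ (IH a (Order.lt_succ_iff.mp hlt) G h)
  | limit b hb IH =>
    intro a ha G _ h
    rcases eq_or_lt_of_le ha with rfl | hlt
    · exact h
    · rw [xcl_limit _ hb]
      exact ⟨a, hlt, h⟩

theorem free_mem_C {Q : Type} [Group Q] [IsFreeGroup Q] {C : GroupClass}
    (hA : Contains classA C) (hDU : DirectedUnionClosed C) : C Q := by
  classical
  set β := IsFreeGroup.Generators Q with hβ
  let e : Q ≃* FreeGroup β := IsFreeGroup.toFreeGroup Q
  let φ : (T : Finset β) → (FreeGroup {x : β // x ∈ T} →* Q) := fun T =>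
    e.symm.toMonoidHom.comp (FreeGroup.map Subtype.val)
  have hφof : ∀ (T : Finset β) (x : {x : β // x ∈ T}), φ T (FreeGroup.of x) = e.symm (FreeGroup.of x.1) := by
    intro T x; simp [φ]
  have hinj : ∀ T, Function.Injective (φ T) := by
    intro T
    have : Function.Injective (FreeGroup.map (Subtype.val : {x : β // x ∈ T} → β)) := by
      let ρ : FreeGroup β →* FreeGroup {x : β // x ∈ T} :=
        FreeGroup.lift (fun b => if h : b ∈ T then FreeGroup.of ⟨b, h⟩ else 1)
      have hl : ρ.comp (FreeGroup.map Subtype.val) = MonoidHom.id _ := by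
        apply FreeGroup.ext_hom
        intro x
        simp [ρ, FreeGroup.map.of, x.2]
      intro u v huv
      have := congrArg ρ huv
      calc u = ρ (FreeGroup.map Subtype.val u) := by
              rw [show ρ (FreeGroup.map Subtype.val u) = (ρ.comp (FreeGroup.map Subtype.val)) u from rfl, hl]; rfl
        _ = ρ (FreeGroup.map Subtype.val v) := this
        _ = v := by
              rw [show ρ (FreeGroup.map Subtype.val v) = (ρ.comp (FreeGroup.map Subtype.val)) v from rfl, hl]; rfl
    exact (EmbeddingLike.injective e.symm).comp this
  let f : Finset β → Subgroup Q := fun T => (φ T).range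
  have hmono : ∀ T T' : Finset β, T ⊆ T' → f T ≤ f T' := by
    intro T T' hTT'
    have hcomp : φ T = (φ T').comp (FreeGroup.map (fun x : {x : β // x ∈ T} => (⟨x.1, hTT' x.2⟩ : {x : β // x ∈ T'}))) := by
      apply FreeGroup.ext_hom
      intro x
      simp [φ, FreeGroup.map.of]
    rintro y ⟨w, rfl⟩
    exact ⟨FreeGroup.map _ w, by rw [hcomp]; rfl⟩
  have hdir : Directed (· ≤ ·) f :=
    fun T T' => ⟨T ∪ T', hmono _ _ Finset.subset_union_left, hmono _ _ Finset.subset_union_right⟩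
  have htop : (⨆ T, f T) = ⊤ := by
    rw [Subgroup.eq_top_iff']
    intro q
    have key : ∀ w : FreeGroup β, e.symm w ∈ ⨆ T, f T := by
      intro w
      refine FreeGroup.induction_on w ?_ ?_ ?_ ?_
      · rw [map_one]; exact one_mem _
      · intro x
        have : e.symm (FreeGroup.of x) ∈ f {x} :=
          ⟨FreeGroup.of ⟨x, Finset.mem_singleton_self x⟩, hφof _ _⟩
        exact Subgroup.mem_iSup_of_mem _ this
      · intro x hx
        rw [map_inv]; exact inv_mem hx
      · intro x y hx hy
        rw [map_mul]; exact mul_mem hx hy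
    have : q = e.symm (e q) := by simp
    rw [this]; exact key _
  refine hDU Q _ f hdir (fun T => hA _ ?_) htop
  exact Or.inl ⟨T.card, ⟨((MonoidHom.ofInjective (hinj T)).symm.trans
    ((FreeGroup.freeGroupCongr T.equivFin))).symm.symm⟩⟩

theorem main_emb {C : GroupClass} (hA : Contains classA C) (hDU : DirectedUnionClosed C)
    (hExt : ExtensionClosed C) :
    ∀ (a : Ordinal) (G₀ : Type) [Group G₀], Xcl classA a G₀ →
      ∀ (G : Type) [Group G] (f : G →* G₀), Function.Injective f → C G := by
  intro a
  induction a using Ordinal.limitRecOn with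
  | zero =>
    intro G₀ _ h G _ f hf
    rw [xcl_zero] at h
    haveI : Subsingleton G := ⟨fun x y => hf (Subsingleton.elim _ _)⟩
    exact hA G (classA_of_subsingleton G)
  | add_one a IH =>
    simp only [Ordinal.add_one_eq_succ] at *
    intro G₀ _ h G _ f hf
    rw [xcl_succ] at h
    classical
    refine hDU G (Finset G) (fun s => Subgroup.closure ↑s) ?_ ?_ ?_
    case refine_1 =>
      intro s t
      exact ⟨s ∪ t, Subgroup.closure_mono (by simp [Finset.coe_union]),
        Subgroup.closure_mono (by simp [Finset.coe_union])⟩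
    case refine_3 =>
      rw [Subgroup.eq_top_iff']
      intro x
      exact Subgroup.mem_iSup_of_mem {x}
        (Subgroup.subset_closure (by simp))
    intro s
    set L := Subgroup.closure (↑s : Set G) with hL
    obtain ⟨H, hsH, N, hN, hXa, hAq⟩ := h (s.image f)
    letI := hN
    have hg : Function.Injective (f.comp L.subtype) :=
      hf.comp Subtype.val_injective
    have hmem : ∀ x : ↥L, (f.comp L.subtype) x ∈ H := by
      intro x
      have hle : L ≤ H.comap f := by
        rw [hL]
        apply Subgroup.closure_le _ |>.mpr
        intro a ha
        exact hsH _ (Finset.mem_image_of_mem f ha)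
      exact hle x.2
    let g' : ↥L →* ↥H := (f.comp L.subtype).codRestrict H hmem
    have hg' : Function.Injective g' := by
      intro x y hxy
      exact hg (congrArg Subtype.val hxy)
    let N' : Subgroup ↥L := N.comap g'
    haveI hN' : N'.Normal := hN.comap g'
    refine hExt ↥L N' hN' ?_ ?_
    · -- C ↥N'
      let j : ↥N' →* ↥N := (g'.comp N'.subtype).codRestrict N (fun x => x.2)
      have hj : Function.Injective j := by
        intro x y hxy
        exact Subtype.ext (hg' (congrArg Subtype.val hxy))
      exact IH ↥N hXa ↥N' j hj
    · -- C (↥L ⧸ N')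
      let ρ : ↥L →* (↥H ⧸ N) := (QuotientGroup.mk' N).comp g'
      have hker : ρ.ker = N' := by
        ext x
        simp [ρ, MonoidHom.mem_ker, QuotientGroup.eq_one_iff, N', Subgroup.mem_comap]
      let ε : (↥L ⧸ N') ≃* ρ.range :=
        (QuotientGroup.quotientMulEquivOfEq hker.symm).trans
          (QuotientGroup.quotientKerEquivRange ρ)
      rcases hAq with ⟨n, ⟨i⟩⟩ | ham
      · let K : Subgroup (FreeGroup (Fin n)) := ρ.range.map i.toMonoidHom
        have heq : (↥L ⧸ N') ≃* ↥K :=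
          ε.trans (ρ.range.equivMapOfInjective i.toMonoidHom i.injective)
        haveI : IsFreeGroup (↥L ⧸ N') := IsFreeGroup.ofMulEquiv heq.symm
        exact free_mem_C hA hDU
      · exact hA _ (Or.inr (amenable_congr ε.symm (amenable_subgroup _ ham)))
  | limit a ha IH =>
    intro G₀ _ h G _ f hf
    rw [xcl_limit _ ha] at h
    obtain ⟨b, hb, hG₀⟩ := h
    exact IH b hb G₀ hG₀ G f hf

theorem classMul_xcl : ∀ (b a : Ordinal) (G : Type) [Group G],
    classMul (Xcl classA a) (Xcl classA b) G → Xcl classA (a + b) G := by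
  intro b
  induction b using Ordinal.limitRecOn with
  | zero =>
    rintro a G _ ⟨H, hn, hH, hq⟩
    letI := hn
    have hq' : Xcl classA 0 (G ⧸ H) := hq
    rw [xcl_zero] at hq'
    have hHtop : H = ⊤ := by
      ext g
      simp only [Subgroup.mem_top, iff_true]
      exact (QuotientGroup.eq_one_iff g).mp (Subsingleton.elim _ _)
    rw [add_zero]
    rw [hHtop] at hH
    exact xcl_congr a _ G Subgroup.topEquiv hH
  | add_one c IH =>
    simp only [Ordinal.add_one_eq_succ] at *
    rintro a G _ ⟨H, hn, hH, hq⟩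
    letI := hn
    classical
    have hq' : Xcl classA (Order.succ c) (G ⧸ H) := hq
    rw [xcl_succ] at hq'
    rw [Ordinal.add_succ, xcl_succ]
    intro s
    set π := QuotientGroup.mk' H with hπ
    obtain ⟨Qb, hsQ, Nb, hNb, hXc, hAb⟩ := hq' (s.image π)
    letI := hNb
    set Mb : Subgroup (G ⧸ H) := Nb.map Qb.subtype with hMb
    set Q : Subgroup G := Qb.comap π with hQdef
    set M : Subgroup G := Mb.comap π with hMdef
    have hMQ : M ≤ Q := fun x hx => Subgroup.map_subtype_le Nb hx
    have hHQ : H ≤ Q := by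
      intro x hx
      show π x ∈ Qb
      rw [show π x = 1 from (QuotientGroup.eq_one_iff x).mpr hx]
      exact one_mem _
    have hHM : H ≤ M := by
      intro x hx
      show π x ∈ Mb
      rw [show π x = 1 from (QuotientGroup.eq_one_iff x).mpr hx]
      exact one_mem _
    set N : Subgroup ↥Q := M.subgroupOf Q with hNdef
    have hNnormal : N.Normal := by
      constructor
      intro n hn' q
      have hπn : π (n : G) ∈ Mb := hn'
      obtain ⟨m, hm, hmeq⟩ := hπn
      have hconj : (⟨π (q : G), q.2⟩ : ↥Qb) * m * (⟨π (q : G), q.2⟩ : ↥Qb)⁻¹ ∈ Nb :=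
        hNb.conj_mem m hm _
      show π ((q : G) * (n : G) * (q : G)⁻¹) ∈ Mb
      refine ⟨_, hconj, ?_⟩
      have : (Qb.subtype) m = π (n : G) := hmeq
      simp [map_mul, map_inv, this]
    -- the normal subgroup `Hq ≤ N`
    set Hq : Subgroup ↥Q := H.subgroupOf Q with hHqdef
    have hHqN : Hq ≤ N := by
      intro x hx
      have : (x : G) ∈ H := hx
      exact hHM this
    set H2 : Subgroup ↥N := Hq.subgroupOf N with hH2def
    have hH2normal : H2.Normal := by
      constructor
      intro n hn' q
      have h1 : ((n : ↥Q) : G) ∈ H := hn'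
      show (((q * n * q⁻¹ : ↥N) : ↥Q) : G) ∈ H
      have : (((q * n * q⁻¹ : ↥N) : ↥Q) : G)
          = ((q : ↥Q) : G) * ((n : ↥Q) : G) * (((q : ↥Q) : G))⁻¹ := rfl
      rw [this]
      exact hn.conj_mem _ h1 _
    -- `Xcl a H2`
    have hXaH2 : Xcl classA a ↥H2 := by
      refine xcl_congr a ↥H ↥H2 ?_ hH
      exact ((Subgroup.subgroupOfEquivOfLe hHqN).trans (Subgroup.subgroupOfEquivOfLe hHQ)).symm
    -- `Xcl c (N ⧸ H2)` via `ψ : ↥N →* ↥Nb`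
    have hXcQuot : Xcl classA c (↥N ⧸ H2) := by
      let χ : ↥N →* ↥Qb := ((π.comp (Q.subtype.comp N.subtype))).codRestrict Qb
        (fun x => (x : ↥Q).2)
      have hχmem : ∀ x : ↥N, χ x ∈ Nb := by
        intro x
        have hx : Qb.subtype (χ x) ∈ Nb.map Qb.subtype := x.2
        exact (Subgroup.mem_map_iff_mem Qb.subtype_injective).mp hx
      let ψ : ↥N →* ↥Nb := χ.codRestrict Nb hχmem
      have hsurj : Function.Surjective ψ := by
        rintro ⟨⟨mval, hmQb⟩, hmNb⟩
        obtain ⟨g, hg⟩ := QuotientGroup.mk'_surjective H mval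
        have hgQ : g ∈ Q := by show π g ∈ Qb; rw [hg]; exact hmQb
        have hgN : (⟨g, hgQ⟩ : ↥Q) ∈ N := by
          show π g ∈ Mb
          rw [hg]
          exact Subgroup.mem_map_of_mem _ hmNb
        refine ⟨⟨⟨g, hgQ⟩, hgN⟩, ?_⟩
        apply Subtype.ext; apply Subtype.ext
        exact hg
      have hker : ψ.ker = H2 := by
        ext x
        have : ψ x = 1 ↔ π ((x : ↥Q) : G) = 1 := by
          constructor
          · intro hx
            exact congrArg (Qb.subtype ∘ Nb.subtype) hx
          · intro hx
            apply Subtype.ext; apply Subtype.ext; exact hx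
        rw [MonoidHom.mem_ker, this, hπ, QuotientGroup.mk'_apply, QuotientGroup.eq_one_iff]
        rfl
      have equiv : (↥N ⧸ H2) ≃* ↥Nb :=
        (QuotientGroup.quotientMulEquivOfEq hker.symm).trans
          (QuotientGroup.quotientKerEquivOfSurjective ψ hsurj)
      exact xcl_congr c ↥Nb _ equiv.symm hXc
    have hXN : Xcl classA (a + c) ↥N := IH a ↥N ⟨H2, hH2normal, hXaH2, hXcQuot⟩
    -- `classA (Q ⧸ N)`
    have hAq : classA (↥Q ⧸ N) := by
      let χ' : ↥Q →* ↥Qb := (π.comp Q.subtype).codRestrict Qb (fun x => x.2)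
      let φ : ↥Q →* (↥Qb ⧸ Nb) := (QuotientGroup.mk' Nb).comp χ'
      have hχ'surj : Function.Surjective χ' := by
        rintro ⟨qval, hq⟩
        obtain ⟨g, hg⟩ := QuotientGroup.mk'_surjective H qval
        have hgQ : g ∈ Q := by show π g ∈ Qb; rw [hg]; exact hq
        exact ⟨⟨g, hgQ⟩, Subtype.ext hg⟩
      have hφsurj : Function.Surjective φ :=
        (QuotientGroup.mk'_surjective Nb).comp hχ'surj
      have hker : φ.ker = N := by
        ext x
        rw [MonoidHom.mem_ker]
        show (QuotientGroup.mk' Nb) (χ' x) = 1 ↔ x ∈ N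
        rw [QuotientGroup.mk'_apply, QuotientGroup.eq_one_iff]
        constructor
        · intro hx
          show π (x : G) ∈ Mb
          exact Subgroup.mem_map_of_mem _ hx
        · intro hx
          have : Qb.subtype (χ' x) ∈ Nb.map Qb.subtype := hx
          exact (Subgroup.mem_map_iff_mem Qb.subtype_injective).mp this
      have equiv : (↥Q ⧸ N) ≃* (↥Qb ⧸ Nb) :=
        (QuotientGroup.quotientMulEquivOfEq hker.symm).trans
          (QuotientGroup.quotientKerEquivOfSurjective φ hφsurj)
      exact classA_congr equiv.symm hAb
    refine ⟨Q, fun x hx => ?_, N, hNnormal, hXN, hAq⟩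
    exact hsQ _ (Finset.mem_image_of_mem π hx)
  | limit b hb IH =>
    rintro a G _ ⟨H, hn, hH, hq⟩
    letI := hn
    have hq' : Xcl classA b (G ⧸ H) := hq
    rw [xcl_limit _ hb] at hq'
    obtain ⟨c, hc, hqc⟩ := hq'
    have := IH c hc a G ⟨H, hn, hH, hqc⟩
    exact xcl_mono _ _ (add_le_add_right hc.le a) G this

theorem classA_subset_U : Contains classA (fun G [Group G] => ∃ a, Xcl classA a G) := by
  intro G _ h
  refine ⟨Order.succ 0, ?_⟩
  rw [xcl_succ]
  intro s
  refine ⟨⊤, fun x _ => trivial, ⊥, inferInstance, ?_, ?_⟩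
  · rw [xcl_zero]; infer_instance
  · exact classA_congr (Subgroup.topEquiv.symm.trans
      (QuotientGroup.quotientBot (G := ↥(⊤ : Subgroup G))).symm) h

theorem U_du : DirectedUnionClosed (fun G [Group G] => ∃ a, Xcl classA a G) := by
  intro G _ ι f hdir hmem htop
  classical
  rcases isEmpty_or_nonempty ι with hι | hι
  · refine ⟨0, ?_⟩
    rw [xcl_zero]
    have h1 : ∀ x : G, x ∈ (⨆ i, f i) := fun x => htop.symm ▸ Subgroup.mem_top x
    rw [iSup_of_empty] at h1
    exact ⟨fun x y => by
      rw [Subgroup.mem_bot.mp (h1 x), Subgroup.mem_bot.mp (h1 y)]⟩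
  · choose av hav using hmem
    have hbdd : BddAbove (Set.range av) := Ordinal.bddAbove_range av
    set S := ⨆ i, av i with hS
    have hle : ∀ i, av i ≤ S := fun i => le_ciSup hbdd i
    refine ⟨Order.succ S, ?_⟩
    rw [xcl_succ]
    intro s
    have hx : ∀ x : {x // x ∈ s}, ∃ i, (x : G) ∈ f i := by
      intro x
      have : (x : G) ∈ ⨆ i, f i := htop.symm ▸ Subgroup.mem_top _
      exact (Subgroup.mem_iSup_of_directed hdir).mp this
    choose ix hix using hx
    obtain ⟨i0, hi0⟩ := hdir.finset_le (s.attach.image ix)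
    refine ⟨f i0, fun x hxs => ?_, ?_⟩
    · exact hi0 (ix ⟨x, hxs⟩) (Finset.mem_image_of_mem ix (s.mem_attach ⟨x, hxs⟩)) (hix ⟨x, hxs⟩)
    · exact classMul_of_xcl (xcl_mono S (av i0) (hle i0) _ (hav i0))

theorem U_ext : ExtensionClosed (fun G [Group G] => ∃ a, Xcl classA a G) := by
  rintro G _ H hn ⟨a, ha⟩ hq
  letI := hn
  obtain ⟨b, hb⟩ := hq
  exact ⟨a + b, classMul_xcl b a G ⟨H, hn, ha, hb⟩⟩


/-- `X = ⋃_a X_a`, and `X_a · X_b ⊆ X_{a+b}`. -/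
theorem stmt8 :
    (∀ (G : Type) [Group G], smallestX classA G ↔ ∃ a : Ordinal, Xcl classA a G) ∧
    (∀ (a b : Ordinal) (G : Type) [Group G],
      classMul (Xcl classA a) (Xcl classA b) G → Xcl classA (a + b) G) := by
  constructor
  · intro G _
    constructor
    · intro h
      exact h (fun G [Group G] => ∃ a, Xcl classA a G) classA_subset_U U_du U_ext
    · rintro ⟨a, ha⟩ C hA hDU hExt
      exact main_emb hA hDU hExt a G ha G (MonoidHom.id G) fun x y hxy => hxy
  · intro a b G _ h
    exact classMul_xcl b a G h
end

section
/- Let K be a division ring, G an infinite cyclic group, and K*G a crossed product ring. Then every nonzero left or right ideal of K*G is free of rank one; in particular K*G is a free ideal ring (fir). As a special case, the Laurent polynomial ring K[t, t⁻¹] over a division ring K (with t central) has the property that every nonzero left ideal is free of rank one. -/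
open Finsupp
set_option linter.unusedSectionVars false

structure ZCtx (K A : Type*) [DivisionRing K] [Ring A] (ι : K →+* A) (w : ℤ → Aˣ) : Prop where
  free : ∀ a : A, ∃! f : ℤ →₀ K, a = f.sum fun n c => ι c * (w n : A)
  twist : ∀ m n : ℤ, ∃ c : Kˣ, (w m : A) * (w n : A) = ι c * (w (m + n) : A)
  conj : ∀ (n : ℤ) (c : K), ∃ c' : K, (w n : A) * ι c = ι c' * (w n : A)

namespace ZCtx

variable {K A : Type*} [DivisionRing K] [Ring A] {ι : K →+* A} {w : ℤ → Aˣ}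
  (C : ZCtx K A ι w)

noncomputable def D (a : A) : ℤ →₀ K := (C.free a).choose

lemma D_spec (a : A) : a = (C.D a).sum fun n c => ι c * (w n : A) :=
  (C.free a).choose_spec.1

lemma D_unique {a : A} {f : ℤ →₀ K} (hf : a = f.sum fun n c => ι c * (w n : A)) :
    f = C.D a := (C.free a).choose_spec.2 f hf

lemma D_zero : C.D 0 = 0 := (C.D_unique (by simp)).symm

lemma D_add (a b : A) : C.D (a + b) = C.D a + C.D b :=
  (C.D_unique (by
    rw [Finsupp.sum_add_index' (by simp) (by intros; rw [map_add, add_mul]),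
      ← C.D_spec, ← C.D_spec])).symm

lemma D_neg (a : A) : C.D (-a) = - C.D a := by
  have h := C.D_add a (-a)
  rw [add_neg_cancel, C.D_zero] at h
  exact (neg_eq_of_add_eq_zero_right h.symm).symm

lemma D_sub (a b : A) : C.D (a - b) = C.D a - C.D b := by
  rw [sub_eq_add_neg, C.D_add, C.D_neg, sub_eq_add_neg]

lemma D_eq_zero_iff {a : A} : C.D a = 0 ↔ a = 0 := by
  constructor
  · intro h
    have := C.D_spec a
    rw [h] at this
    simpa using this
  · rintro rfl; exact C.D_zero

variable [Nontrivial A]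

include C in
lemma ι_inj : Function.Injective ι := ι.injective

/-- conjugation of coefficients -/
noncomputable def σ (n : ℤ) (c : K) : K := (C.conj n c).choose

lemma σ_spec (n : ℤ) (c : K) : (w n : A) * ι c = ι (C.σ n c) * (w n : A) :=
  (C.conj n c).choose_spec

lemma σ_eq_zero_iff (n : ℤ) (c : K) : C.σ n c = 0 ↔ c = 0 := by
  constructor
  · intro h
    have h1 := C.σ_spec n c
    rw [h, map_zero, zero_mul] at h1
    rw [Units.mul_right_eq_zero] at h1
    exact (map_eq_zero_iff ι (C.ι_inj)).mp h1
  · rintro rfl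
    have h1 := (C.σ_spec n 0).symm
    rw [map_zero, mul_zero, Units.mul_left_eq_zero] at h1
    exact (map_eq_zero_iff ι (C.ι_inj)).mp h1

/-- twisting units -/
noncomputable def τ (m n : ℤ) : Kˣ := (C.twist m n).choose

lemma τ_spec (m n : ℤ) : (w m : A) * (w n : A) = ι (C.τ m n) * (w (m + n) : A) :=
  (C.twist m n).choose_spec

lemma D_mul_single (c : K) (m : ℤ) (b : A) :
    C.D (ι c * (w m : A) * b) =
      (C.D b).sum fun n e => Finsupp.single (m + n) (c * C.σ m e * (C.τ m n : K)) := by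
  refine (C.D_unique ?_).symm
  have key : ι c * (w m : A) * b
      = (C.D b).sum fun n e => ι (c * C.σ m e * (C.τ m n : K)) * (w (m + n) : A) := by
    conv_lhs => rw [C.D_spec b]
    rw [Finsupp.mul_sum]
    refine Finsupp.sum_congr fun n _ => ?_
    calc ι c * (w m : A) * (ι (C.D b n) * (w n : A))
        = ι c * ((w m : A) * ι (C.D b n)) * (w n : A) := by simp only [mul_assoc]
      _ = ι c * (ι (C.σ m (C.D b n)) * (w m : A)) * (w n : A) := by rw [C.σ_spec]
      _ = ι c * ι (C.σ m (C.D b n)) * ((w m : A) * (w n : A)) := by simp only [mul_assoc]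
      _ = ι c * ι (C.σ m (C.D b n)) * (ι (C.τ m n) * (w (m+n) : A)) := by rw [C.τ_spec]
      _ = ι (c * C.σ m (C.D b n) * (C.τ m n : K)) * (w (m+n) : A) := by
          rw [map_mul, map_mul]; simp only [mul_assoc]
  rw [key]
  rw [Finsupp.sum_sum_index (by intro a; simp) (by intros; rw [map_add, add_mul])]
  refine Finsupp.sum_congr fun n _ => ?_
  rw [Finsupp.sum_single_index (by simp)]

lemma D_mul_single_apply (c : K) (m : ℤ) (b : A) (k : ℤ) :
    C.D (ι c * (w m : A) * b) k = c * C.σ m (C.D b (k - m)) * (C.τ m (k - m) : K) := by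
  rw [C.D_mul_single, Finsupp.sum_apply]
  have hcongr : (C.D b).sum (fun n e =>
        (Finsupp.single (m + n) (c * C.σ m e * (C.τ m n : K)) : ℤ →₀ K) k)
      = (C.D b).sum fun n e =>
        if n = k - m then c * C.σ m e * (C.τ m n : K) else 0 := by
    refine Finsupp.sum_congr fun n _ => ?_
    rw [Finsupp.single_apply]
    exact if_congr (by omega) rfl rfl
  rw [hcongr, Finsupp.sum_ite_eq']
  by_cases hmem : k - m ∈ (C.D b).support
  · rw [if_pos hmem]
  · rw [if_neg hmem]
    rw [Finsupp.notMem_support_iff] at hmem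
    rw [hmem, (C.σ_eq_zero_iff m 0).mpr rfl]
    simp

lemma D_finsupp_sum {β N : Type*} [Zero N] (f : β →₀ N) (g : β → N → A) :
    C.D (f.sum g) = f.sum fun i e => C.D (g i e) :=
  map_finsuppSum (AddMonoidHom.mk' C.D C.D_add) f g

lemma D_mul_apply (x g : A) (k : ℤ) :
    C.D (x * g) k = ∑ m ∈ (C.D x).support,
      C.D x m * C.σ m (C.D g (k - m)) * (C.τ m (k - m) : K) := by
  have hx : x * g = (C.D x).sum fun m c => ι c * (w m : A) * g := by
    conv_lhs => rw [C.D_spec x]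
    rw [Finsupp.sum_mul]
  rw [hx, C.D_finsupp_sum, Finsupp.sum_apply, Finsupp.sum]
  refine Finset.sum_congr rfl fun m _ => ?_
  rw [C.D_mul_single_apply]

include C in
lemma mul_ne_zero' {x g : A} (hx : x ≠ 0) (hg : g ≠ 0) : x * g ≠ 0 := by
  have hxs : (C.D x).support.Nonempty := by
    rw [Finsupp.support_nonempty_iff]; exact fun h => hx (C.D_eq_zero_iff.mp h)
  have hgs : (C.D g).support.Nonempty := by
    rw [Finsupp.support_nonempty_iff]; exact fun h => hg (C.D_eq_zero_iff.mp h)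
  set Mx := (C.D x).support.max' hxs with hMx
  set Mg := (C.D g).support.max' hgs with hMg
  have hcoef : C.D (x * g) (Mx + Mg) ≠ 0 := by
    rw [C.D_mul_apply]
    rw [Finset.sum_eq_single Mx]
    · have h1 : C.D x Mx ≠ 0 := Finsupp.mem_support_iff.mp ((C.D x).support.max'_mem hxs)
      have h2 : C.D g (Mx + Mg - Mx) ≠ 0 := by
        rw [show Mx + Mg - Mx = Mg by ring]
        exact Finsupp.mem_support_iff.mp ((C.D g).support.max'_mem hgs)
      exact mul_ne_zero (mul_ne_zero h1 (fun h => h2 ((C.σ_eq_zero_iff _ _).mp h)))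
        (Units.ne_zero _)
    · intro m hm hne
      have hlt : m < Mx := lt_of_le_of_ne (Finset.le_max' _ _ hm) hne
      have : C.D g (Mx + Mg - m) = 0 := by
        rw [Finsupp.notMem_support_iff.symm]
        intro hmem
        have := Finset.le_max' _ _ hmem
        omega
      rw [this, (C.σ_eq_zero_iff _ _).mpr rfl]
      simp
    · intro h
      exact absurd ((C.D x).support.max'_mem hxs) h
  intro h
  rw [h, C.D_zero] at hcoef
  simp at hcoef

/-- width of a nonzero element -/
noncomputable def wdt (a : A) : ℕ :=
  ((WithBot.unbotD 0 (C.D a).support.max) - (WithTop.untopD 0 (C.D a).support.min)).toNat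

omit [Nontrivial A] in
lemma wdt_eq {a : A} (h : (C.D a).support.Nonempty) :
    C.wdt a = ((C.D a).support.max' h - (C.D a).support.min' h).toNat := by
  rw [wdt, ← Finset.coe_max' h, ← Finset.coe_min' h]
  rfl

omit [Nontrivial A] in
lemma supp_nonempty {a : A} (ha : a ≠ 0) : (C.D a).support.Nonempty := by
  rw [Finsupp.support_nonempty_iff]
  exact fun h => ha (C.D_eq_zero_iff.mp h)

include C in
theorem key (I : Ideal A) (hI : I ≠ ⊥) : Nonempty (↥I ≃ₗ[A] A) := by
  -- pick a nonzero element
  obtain ⟨g₀, hg₀I, hg₀⟩ := Submodule.exists_mem_ne_zero_of_ne_bot hI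
  -- the set of widths of nonzero elements of I
  set S : Set ℕ := {n | ∃ b ∈ I, b ≠ 0 ∧ C.wdt b = n} with hS
  have hSne : S.Nonempty := ⟨C.wdt g₀, g₀, hg₀I, hg₀, rfl⟩
  obtain ⟨g, hgI, hg, hgw⟩ : ∃ b ∈ I, b ≠ 0 ∧ C.wdt b = sInf S := Nat.sInf_mem hSne
  have hmin : ∀ b ∈ I, b ≠ 0 → C.wdt g ≤ C.wdt b := by
    intro b hbI hb
    rw [hgw]
    exact Nat.sInf_le ⟨b, hbI, hb, rfl⟩
  -- every element of I is a left multiple of g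
  have main : ∀ n : ℕ, ∀ a ∈ I, a ≠ 0 → C.wdt a < n → a ∈ Ideal.span {g} := by
    intro n
    induction n with
    | zero => intro a _ _ h; omega
    | succ n IH =>
      intro a haI ha haw
      have has := C.supp_nonempty ha
      have hgss := C.supp_nonempty hg
      set Ma := (C.D a).support.max' has with hMa
      set ma := (C.D a).support.min' has with hma
      set Mg := (C.D g).support.max' hgss with hMg
      set mg := (C.D g).support.min' hgss with hmg
      have hma_le : ma ≤ Ma := Finset.min'_le _ _ (Finset.max'_mem _ _)
      have hmg_le : mg ≤ Mg := Finset.min'_le _ _ (Finset.max'_mem _ _)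
      have hwa : C.wdt a = (Ma - ma).toNat := C.wdt_eq has
      have hwg : C.wdt g = (Mg - mg).toNat := C.wdt_eq hgss
      have hge : C.wdt g ≤ C.wdt a := hmin a haI ha
      have hwid : Mg - mg ≤ Ma - ma := by omega
      set kk := Ma - Mg with hkk
      have hα : C.D a Ma ≠ 0 := Finsupp.mem_support_iff.mp ((C.D a).support.max'_mem has)
      have hβ : C.D g Mg ≠ 0 := Finsupp.mem_support_iff.mp ((C.D g).support.max'_mem hgss)
      have hσβ : C.σ kk (C.D g Mg) ≠ 0 := fun h => hβ ((C.σ_eq_zero_iff _ _).mp h)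
      set c : K := C.D a Ma * ((C.τ kk Mg : K))⁻¹ * (C.σ kk (C.D g Mg))⁻¹ with hc
      set x : A := ι c * (w kk : A) with hx
      have hxgI : x * g ∈ I := I.mul_mem_left x hgI
      have hxg_span : x * g ∈ Ideal.span {g} := by
        rw [Ideal.mem_span_singleton']
        exact ⟨x, rfl⟩
      -- coefficient of x*g at any point
      have hDxg : ∀ p : ℤ, C.D (x * g) p
          = c * C.σ kk (C.D g (p - kk)) * (C.τ kk (p - kk) : K) := by
        intro p
        rw [hx, C.D_mul_single_apply]
      -- the top coefficient matches
      have htop : C.D (x * g) Ma = C.D a Ma := by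
        rw [hDxg, show Ma - kk = Mg by omega, hc]
        simp only [mul_assoc, inv_mul_cancel_left₀ hσβ, inv_mul_cancel₀ (Units.ne_zero (C.τ kk Mg)), mul_one]
      set a' := a - x * g with ha'
      have ha'I : a' ∈ I := I.sub_mem haI hxgI
      have hDa' : ∀ p : ℤ, C.D a' p = C.D a p - C.D (x * g) p := by
        intro p
        rw [ha', C.D_sub]
        rfl
      have hkill_top : ∀ p : ℤ, Ma ≤ p → C.D a' p = 0 := by
        intro p hp
        rcases eq_or_lt_of_le hp with heq | hlt
        · rw [hDa', ← heq, htop, sub_self]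
        · have h1 : C.D a p = 0 := by
            rw [← Finsupp.notMem_support_iff]
            intro hmem
            exact absurd (Finset.le_max' _ _ hmem) (by omega)
          have h2 : C.D g (p - kk) = 0 := by
            rw [← Finsupp.notMem_support_iff]
            intro hmem
            have := Finset.le_max' _ _ hmem
            omega
          rw [hDa', h1, hDxg, h2, (C.σ_eq_zero_iff _ _).mpr rfl]
          simp
      have hkill_bot : ∀ p : ℤ, p < ma → C.D a' p = 0 := by
        intro p hp
        have h1 : C.D a p = 0 := by
          rw [← Finsupp.notMem_support_iff]
          intro hmem
          exact absurd (Finset.min'_le _ _ hmem) (by omega)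
        have h2 : C.D g (p - kk) = 0 := by
          rw [← Finsupp.notMem_support_iff]
          intro hmem
          have := Finset.min'_le _ _ hmem
          omega
        rw [hDa', h1, hDxg, h2, (C.σ_eq_zero_iff _ _).mpr rfl]
        simp
      by_cases h0 : a' = 0
      · have : a = x * g := by rw [← sub_eq_zero]; exact h0
        rw [this]; exact hxg_span
      · have ha's := C.supp_nonempty h0
        have hbound : ∀ p ∈ (C.D a').support, ma ≤ p ∧ p < Ma := by
          intro p hp
          have hne := Finsupp.mem_support_iff.mp hp
          constructor
          · by_contra hcon
            exact hne (hkill_bot p (by omega))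
          · by_contra hcon
            exact hne (hkill_top p (by omega))
        have hMa' := hbound _ ((C.D a').support.max'_mem ha's)
        have hma' := hbound _ ((C.D a').support.min'_mem ha's)
        have hwa' : C.wdt a' = ((C.D a').support.max' ha's - (C.D a').support.min' ha's).toNat :=
          C.wdt_eq ha's
        have hlt : C.wdt a' < C.wdt a := by
          have h3 : (C.D a').support.min' ha's ≤ (C.D a').support.max' ha's :=
            Finset.min'_le _ _ (Finset.max'_mem _ _)
          omega
        have := IH a' ha'I h0 (by omega)
        have : a = a' + x * g := by rw [ha']; abel
        rw [this]
        exact Ideal.add_mem _ (IH a' ha'I h0 (by omega)) hxg_span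
  have hspan : I = Ideal.span {g} := by
    apply le_antisymm
    · intro a haI
      by_cases ha : a = 0
      · rw [ha]; exact Submodule.zero_mem _
      · exact main (C.wdt a + 1) a haI ha (by omega)
    · rw [Ideal.span_le, Set.singleton_subset_iff]
      exact hgI
  -- the isomorphism
  set f : A →ₗ[A] A := LinearMap.toSpanSingleton A A g with hf
  have hinj : Function.Injective f := by
    rw [← LinearMap.ker_eq_bot]
    rw [Submodule.eq_bot_iff]
    intro x hx
    rw [LinearMap.mem_ker] at hx
    by_contra hxne
    exact C.mul_ne_zero' hxne hg hx
  have hrange : LinearMap.range f = I := by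
    rw [← LinearMap.span_singleton_eq_range, hspan]
  exact ⟨((LinearEquiv.ofInjective f hinj).trans (LinearEquiv.ofEq _ _ hrange)).symm⟩

lemma σ_inj (n : ℤ) : Function.Injective (C.σ n) := by
  intro c c' h
  have h1 := C.σ_spec n c
  have h2 := C.σ_spec n c'
  rw [h] at h1
  have h3 := h1.trans h2.symm
  rw [Units.mul_right_inj] at h3
  exact C.ι_inj h3

section Op

variable (conj₂ : ∀ (n : ℤ) (c : K), ∃ c' : K, ι c * (w n : A) = (w n : A) * ι c')

/-- the inverse coefficient conjugation -/
noncomputable def ρ (n : ℤ) (c : K) : K := (conj₂ n c).choose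

lemma ρ_spec (n : ℤ) (c : K) : ι c * (w n : A) = (w n : A) * ι (ρ conj₂ n c) :=
  (conj₂ n c).choose_spec

include C in
lemma ρ_zero (n : ℤ) : ρ conj₂ n 0 = 0 := by
  have h := (ρ_spec conj₂ n 0).symm
  rw [map_zero, zero_mul, Units.mul_right_eq_zero] at h
  exact (map_eq_zero_iff ι C.ι_inj).mp h

lemma σ_ρ (n : ℤ) (c : K) : C.σ n (ρ conj₂ n c) = c := by
  have h1 := C.σ_spec n (ρ conj₂ n c)
  have h2 := (ρ_spec conj₂ n c).trans h1
  rw [Units.mul_left_inj] at h2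
  exact (C.ι_inj h2).symm

include C conj₂ in
/-- right free representation -/
lemma rightFree : ∀ b : A, ∃! f : ℤ →₀ K, b = f.sum fun n c => (w n : A) * ι c := by
  intro b
  have hρ0 := ρ_zero C conj₂
  -- the σ-transform of a candidate
  have htrans : ∀ f : ℤ →₀ K, (b = f.sum fun n c => (w n : A) * ι c) →
      ∀ n, C.σ n (f n) = C.D b n := by
    intro f hf n
    set Sf : ℤ →₀ K := Finsupp.onFinset f.support (fun k => C.σ k (f k))
      (fun k hk => Finsupp.mem_support_iff.mpr
        (fun h => hk (show C.σ k (f k) = 0 by rw [h]; exact (C.σ_eq_zero_iff _ _).mpr rfl))) with hSf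
    have hSfb : Sf = C.D b := by
      refine C.D_unique ?_
      rw [hSf, Finsupp.onFinset_sum _ (fun n => by simp)]
      rw [hf, Finsupp.sum]
      refine Finset.sum_congr rfl fun n _ => ?_
      rw [← C.σ_spec]
    have : Sf n = C.D b n := by rw [hSfb]
    simpa [hSf] using this
  refine ⟨Finsupp.onFinset (C.D b).support (fun k => ρ conj₂ k (C.D b k))
    (fun k hk => Finsupp.mem_support_iff.mpr
      (fun h => hk (show ρ conj₂ k (C.D b k) = 0 by rw [h]; exact hρ0 k))), ?_, ?_⟩
  · dsimp only
    rw [Finsupp.onFinset_sum _ (fun n => by simp)]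
    conv_lhs => rw [C.D_spec b, Finsupp.sum]
    refine Finset.sum_congr rfl fun n _ => ?_
    rw [← ρ_spec]
  · intro f hf
    ext n
    refine C.σ_inj n ?_
    rw [htrans f hf n, Finsupp.onFinset_apply, σ_ρ]

end Op

end ZCtx

open MulOpposite in
/-- a unit of the opposite ring -/
def uopUnit {A : Type*} [Ring A] (v : Aˣ) : (Aᵐᵒᵖ)ˣ :=
  ⟨op (v : A), op ((v⁻¹ : Aˣ) : A),
    by rw [← op_mul, Units.inv_mul, op_one],
    by rw [← op_mul, Units.mul_inv, op_one]⟩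

namespace ZCtx

open MulOpposite

variable {K A : Type*} [DivisionRing K] [Ring A] {ι : K →+* A} {w : ℤ → Aˣ}
  (C : ZCtx K A ι w) [Nontrivial A]

include C in
lemma opCtx (conj₂ : ∀ (n : ℤ) (c : K), ∃ c' : K, ι c * (w n : A) = (w n : A) * ι c') :
    ZCtx Kᵐᵒᵖ Aᵐᵒᵖ (RingHom.op ι) (fun n => uopUnit (w n)) := by
  have hop_apply : ∀ c : Kᵐᵒᵖ, (RingHom.op ι) c = op (ι c.unop) := fun _ => rfl
  have hterm : ∀ (n : ℤ) (c : Kᵐᵒᵖ),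
      (RingHom.op ι) c * ((uopUnit (w n) : (Aᵐᵒᵖ)ˣ) : Aᵐᵒᵖ) = op ((w n : A) * ι c.unop) := by
    intro n c
    rw [hop_apply]
    exact (op_mul _ _).symm
  constructor
  · -- free
    intro a
    obtain ⟨f, hf, hu⟩ := C.rightFree conj₂ (unop a)
    have key : ∀ f' : ℤ →₀ Kᵐᵒᵖ,
        (f'.sum fun n c => (RingHom.op ι) c * ((uopUnit (w n) : (Aᵐᵒᵖ)ˣ) : Aᵐᵒᵖ))
          = op ((Finsupp.mapRange unop rfl f').sum fun n c => (w n : A) * ι c) := by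
      intro f'
      rw [Finsupp.sum_mapRange_index (fun n => by simp), Finsupp.sum, Finsupp.sum, Finset.op_sum]
      refine Finset.sum_congr rfl fun n _ => ?_
      rw [hterm]
    refine ⟨Finsupp.mapRange op rfl f, ?_, ?_⟩
    · dsimp only
      rw [key]
      have : Finsupp.mapRange unop rfl (Finsupp.mapRange op rfl f) = f := by
        ext n; simp
      rw [this, ← hf, op_unop]
    · intro f'' hf''
      rw [key] at hf''
      have h1 : unop a = (Finsupp.mapRange unop rfl f'').sum fun n c => (w n : A) * ι c := by
        rw [hf'', unop_op]
      have h2 := hu _ h1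
      ext n
      have h3 : unop (f'' n) = f n := by
        rw [← h2]; simp
      have : f'' n = op (unop (f'' n)) := rfl
      rw [this, h3]
      simp
  · -- twist
    intro m n
    obtain ⟨c', hc'⟩ := conj₂ (n + m) ((C.τ n m : K))
    have hc'ne : c' ≠ 0 := by
      intro h
      rw [h, map_zero, mul_zero, Units.mul_left_eq_zero] at hc'
      exact (C.τ n m).ne_zero ((map_eq_zero_iff ι C.ι_inj).mp hc')
    refine ⟨Units.mk0 (op c') (by simpa using hc'ne), ?_⟩
    have lhs : ((uopUnit (w m) : (Aᵐᵒᵖ)ˣ) : Aᵐᵒᵖ) * ((uopUnit (w n) : (Aᵐᵒᵖ)ˣ) : Aᵐᵒᵖ)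
        = op ((w n : A) * (w m : A)) := (op_mul _ _).symm
    have rhs : (RingHom.op ι) ((Units.mk0 (op c') (by simpa using hc'ne) : (Kᵐᵒᵖ)ˣ) : Kᵐᵒᵖ)
          * ((uopUnit (w (m + n)) : (Aᵐᵒᵖ)ˣ) : Aᵐᵒᵖ)
        = op ((w (m + n) : A) * ι c') := by
      rw [hterm]
      rfl
    rw [lhs, rhs]
    rw [C.τ_spec n m, hc']
    rw [show n + m = m + n from add_comm n m]
  · -- conj
    intro n c
    obtain ⟨c', hc'⟩ := conj₂ n c.unop
    refine ⟨op c', ?_⟩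
    have lhs : ((uopUnit (w n) : (Aᵐᵒᵖ)ˣ) : Aᵐᵒᵖ) * (RingHom.op ι) c
        = op (ι c.unop * (w n : A)) := by
      rw [hop_apply]
      exact (op_mul _ _).symm
    rw [lhs, hc']
    exact (hterm n (op c')).symm

end ZCtx

/-- the `op` map as a linear equivalence over `Aᵐᵒᵖ` -/
def opLE (A : Type*) [Ring A] : A ≃ₗ[Aᵐᵒᵖ] Aᵐᵒᵖ where
  toFun := MulOpposite.op
  invFun := MulOpposite.unop
  map_add' _ _ := rfl
  map_smul' _ _ := rfl
  left_inv _ := rfl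
  right_inv _ := rfl

structure IsCrossedProduct (K : Type*) [DivisionRing K] (Q : Type*) [Group Q]
    (A : Type*) [Ring A] (ι : K →+* A) (u : Q → Aˣ) : Prop where
  free : ∀ a : A, ∃! d : Q →₀ K, a = d.sum fun q c => ι c * (u q : A)
  twist : ∀ q r : Q, ∃ c : Kˣ, (u q : A) * (u r : A) = ι c * (u (q * r) : A)
  conj₁ : ∀ (q : Q) (c : K), ∃ c' : K, (u q : A) * ι c = ι c' * (u q : A)
  conj₂ : ∀ (q : Q) (c : K), ∃ c' : K, ι c * (u q : A) = (u q : A) * ι c'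

namespace IsCrossedProduct

variable {K G A : Type*} [DivisionRing K] [Group G] [Ring A]
  {ι : K →+* A} {u : G → Aˣ} (h : IsCrossedProduct K G A ι u) (e : G ≃* Multiplicative ℤ)

include h in
lemma toZCtx : ZCtx K A ι (fun n => u (e.symm (Multiplicative.ofAdd n))) := by
  set E : G ≃ ℤ := e.toEquiv.trans Multiplicative.toAdd with hE
  have hsymm : ∀ n : ℤ, E.symm n = e.symm (Multiplicative.ofAdd n) := fun n => rfl
  have hwE : ∀ q : G, e.symm (Multiplicative.ofAdd (E q)) = q := by
    intro q
    have : Multiplicative.ofAdd (E q) = e q := rfl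
    rw [this, MulEquiv.symm_apply_apply]
  constructor
  · intro a
    obtain ⟨d, hd, hu⟩ := h.free a
    refine ⟨Finsupp.equivMapDomain E d, ?_, ?_⟩
    · show a = (Finsupp.equivMapDomain E d).sum fun n c => ι c * (u (e.symm (Multiplicative.ofAdd n)) : A)
      rw [Finsupp.sum_equivMapDomain]
      rw [show (d.sum fun q c => ι c * (u (e.symm (Multiplicative.ofAdd (E q))) : A))
          = d.sum fun q c => ι c * (u q : A) from
        Finsupp.sum_congr fun q _ => by rw [hwE]]
      exact hd
    · intro f' hf'
      have h1 : a = (Finsupp.equivMapDomain E.symm f').sum fun q c => ι c * (u q : A) := by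
        rw [Finsupp.sum_equivMapDomain]
        rw [hf']
        exact Finsupp.sum_congr fun n _ => by rw [hsymm]
      have h2 := hu _ h1
      ext n
      rw [← h2, Finsupp.equivMapDomain_apply, Finsupp.equivMapDomain_apply,
        Equiv.symm_symm, Equiv.apply_symm_apply]
  · intro m n
    obtain ⟨c, hc⟩ := h.twist (e.symm (Multiplicative.ofAdd m)) (e.symm (Multiplicative.ofAdd n))
    refine ⟨c, ?_⟩
    rw [hc]
    have : e.symm (Multiplicative.ofAdd m) * e.symm (Multiplicative.ofAdd n)
        = e.symm (Multiplicative.ofAdd (m + n)) := by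
      rw [← map_mul]
      rfl
    rw [this]
  · intro n c
    exact h.conj₁ _ c

include h in
lemma conj₂' : ∀ (n : ℤ) (c : K), ∃ c' : K,
    ι c * ((u (e.symm (Multiplicative.ofAdd n)) : Aˣ) : A)
      = ((u (e.symm (Multiplicative.ofAdd n)) : Aˣ) : A) * ι c' :=
  fun n c => h.conj₂ _ c

end IsCrossedProduct

section Laurent

open LaurentPolynomial

variable (K : Type*) [DivisionRing K]

/-- `T n` as a unit -/
noncomputable def TU (n : ℤ) : (LaurentPolynomial K)ˣ :=
  ⟨T n, T (-n), by rw [← T_add, add_neg_cancel, T_zero], by rw [← T_add, neg_add_cancel, T_zero]⟩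

lemma laurentZCtx : ZCtx K (LaurentPolynomial K) LaurentPolynomial.C (TU K) := by
  have hsum : ∀ f : ℤ →₀ K, (f.sum fun n c => LaurentPolynomial.C c * ((TU K n : (LaurentPolynomial K)ˣ) : LaurentPolynomial K)) = AddMonoidAlgebra.ofCoeff f := by
    intro f
    have : ∀ n c, LaurentPolynomial.C c * ((TU K n : (LaurentPolynomial K)ˣ) : LaurentPolynomial K)
        = AddMonoidAlgebra.ofCoeff (Finsupp.single n c) := fun n c => (single_eq_C_mul_T c n).symm
    rw [Finsupp.sum_congr (g2 := fun n c => AddMonoidAlgebra.ofCoeff (Finsupp.single n c)) fun n _ => this n _]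
    rw [← AddMonoidAlgebra.ofCoeff_finsuppSum, Finsupp.sum_single]
  constructor
  · intro a
    refine ⟨a.coeff, (hsum a.coeff).symm, fun f' hf' => ?_⟩
    exact (congrArg AddMonoidAlgebra.coeff (hf'.trans (hsum f'))).symm
  · intro m n
    refine ⟨1, ?_⟩
    show (T m : LaurentPolynomial K) * T n = LaurentPolynomial.C (1 : K) * T (m + n)
    rw [map_one, one_mul, T_add]
  · intro n c
    exact ⟨c, (commute_T n (LaurentPolynomial.C c)).eq⟩

lemma laurentConj₂ : ∀ (n : ℤ) (c : K),
    ∃ c' : K, LaurentPolynomial.C c * ((TU K n : (LaurentPolynomial K)ˣ) : LaurentPolynomial K)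
      = ((TU K n : (LaurentPolynomial K)ˣ) : LaurentPolynomial K) * LaurentPolynomial.C c' :=
  fun n c => ⟨c, ((commute_T n (LaurentPolynomial.C c)).eq).symm⟩

end Laurent

/-- for a division ring `K` and an infinite cyclic group `G`, every
nonzero left or right ideal of a crossed product `K*G` is free of rank one (so
`K*G` is a fir); in particular every nonzero left ideal of the Laurent polynomial
ring `K[t,t⁻¹]` is free of rank one. -/
theorem stmt11 (K : Type) [DivisionRing K] (G : Type) [Group G]
    (hcyc : Nonempty (G ≃* Multiplicative ℤ))
    (A : Type) [Ring A] (ι : K →+* A) (u : G → Aˣ)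
    (h : IsCrossedProduct K G A ι u) :
    ((∀ I : Ideal A, I ≠ ⊥ → Nonempty (↥I ≃ₗ[A] A)) ∧
      (∀ J : Submodule Aᵐᵒᵖ A, J ≠ ⊥ → Nonempty (↥J ≃ₗ[Aᵐᵒᵖ] A))) ∧
    (∀ I : Ideal (LaurentPolynomial K), I ≠ ⊥ →
      Nonempty (↥I ≃ₗ[LaurentPolynomial K] LaurentPolynomial K)) := by
  obtain ⟨e⟩ := hcyc
  refine ⟨⟨?_, ?_⟩, ?_⟩
  · intro I hI
    rcases subsingleton_or_nontrivial A with hs | hn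
    · exact absurd ((Submodule.eq_bot_iff I).mpr fun x _ => Subsingleton.elim x 0) hI
    · exact (h.toZCtx e).key I hI
  · intro J hJ
    rcases subsingleton_or_nontrivial A with hs | hn
    · exact absurd ((Submodule.eq_bot_iff J).mpr fun x _ => Subsingleton.elim x 0) hJ
    · set I : Ideal Aᵐᵒᵖ := Submodule.map (opLE A : A →ₗ[Aᵐᵒᵖ] Aᵐᵒᵖ) J with hIdef
      have hIne : I ≠ ⊥ := by
        obtain ⟨x, hxJ, hx⟩ := Submodule.exists_mem_ne_zero_of_ne_bot hJ
        intro hb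
        have hmem : MulOpposite.op x ∈ I := Submodule.mem_map_of_mem hxJ
        rw [hb, Submodule.mem_bot] at hmem
        exact hx (by simpa using congrArg MulOpposite.unop hmem)
      obtain ⟨φ⟩ := ((h.toZCtx e).opCtx (h.conj₂' e)).key I hIne
      exact ⟨(((opLE A).submoduleMap J).trans φ).trans (opLE A).symm⟩
  · intro I hI
    exact (laurentZCtx K).key I hI
end
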